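/- The set X = {(x,y,z) ∈ ℝ³ : (x²+y²−z²)·(x²+(|y|−z−z³)²−z⁶) = 0, z ≥ 0} is not Lipschitz normally embedded at 0: for any C ≥ 1, taking r ∈ (0,1) and the curves α(t) = (t, √(r²−t²), r) and β(t) = (t, r + r³ − √(r⁶−t²), r) for t ∈ (0,r³), which both lie in X, one has ‖α(t)−β(t)‖ = r + r³ − √(r⁶−t²) − √(r²−t²) and d_X(α(t),β(t)) ≥ t, and the ratio d_X(α(t),β(t))/‖α(t)−β(t)‖ is unbounded as t → 0⁺. -/

import Mathlib

open Set Filter Metric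

/-- Length of a path `γ : [0,1] → E` measured via the (extended) variation. -/
noncomputable def pathLength {E : Type*} [NormedAddCommGroup E] (γ : ℝ → E) : ENNReal :=
  eVariationOn γ (Set.Icc 0 1)

/-- `γ` is a path in `X` from `x` to `y`, parametrized on `[0,1]`. -/
def IsPathIn {E : Type*} [NormedAddCommGroup E] (X : Set E) (x y : E) (γ : ℝ → E) : Prop :=
  ContinuousOn γ (Set.Icc 0 1) ∧ Set.MapsTo γ (Set.Icc 0 1) X ∧ γ 0 = x ∧ γ 1 = y

/-- The inner (length) distance on `X`: the infimum of the lengths of paths in `X`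
joining `x` to `y`. -/
noncomputable def innerDist {E : Type*} [NormedAddCommGroup E] (X : Set E) (x y : E) : ENNReal :=
  ⨅ γ ∈ {γ : ℝ → E | IsPathIn X x y γ}, pathLength γ

/-- Points of `ℝ³` from three coordinates. -/
noncomputable def mk3 (a b c : ℝ) : EuclideanSpace ℝ (Fin 3) :=
  (WithLp.equiv 2 (Fin 3 → ℝ)).symm ![a, b, c]

/-- The set of Example 3.12:
`X = {(x,y,z) : (x²+y²−z²)·(x²+(|y|−z−z³)²−z⁶) = 0, z ≥ 0}`. -/
def X14 : Set (EuclideanSpace ℝ (Fin 3)) :=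
  {p | ((p 0) ^ 2 + (p 1) ^ 2 - (p 2) ^ 2) *
      ((p 0) ^ 2 + (|p 1| - p 2 - (p 2) ^ 3) ^ 2 - (p 2) ^ 6) = 0 ∧ 0 ≤ p 2}

noncomputable def a14 (r t : ℝ) : EuclideanSpace ℝ (Fin 3) :=
  mk3 t (Real.sqrt (r ^ 2 - t ^ 2)) r

noncomputable def b14 (r t : ℝ) : EuclideanSpace ℝ (Fin 3) :=
  mk3 t (r + r ^ 3 - Real.sqrt (r ^ 6 - t ^ 2)) r

/- ### Auxiliary lemmas -/

lemma mk3_apply_0 (a b c : ℝ) : mk3 a b c 0 = a := rfl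
lemma mk3_apply_1 (a b c : ℝ) : mk3 a b c 1 = b := rfl
lemma mk3_apply_2 (a b c : ℝ) : mk3 a b c 2 = c := rfl

lemma mk3_sub (a b c a' b' c' : ℝ) :
    mk3 a b c - mk3 a' b' c' = mk3 (a - a') (b - b') (c - c') := by
  ext i
  fin_cases i <;> rfl

lemma norm_mk3 (a b c : ℝ) : ‖mk3 a b c‖ = Real.sqrt (a ^ 2 + b ^ 2 + c ^ 2) := by
  rw [EuclideanSpace.norm_eq]
  simp [Fin.sum_univ_three, mk3_apply_0, mk3_apply_1, mk3_apply_2, Real.norm_eq_abs, sq_abs]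

lemma coord_abs_le_dist (p q : EuclideanSpace ℝ (Fin 3)) (i : Fin 3) :
    |p i - q i| ≤ dist p q := by
  rw [EuclideanSpace.dist_eq]
  have h1 : |p i - q i| = Real.sqrt (dist (p i) (q i) ^ 2) := by
    rw [Real.sqrt_sq dist_nonneg, Real.dist_eq]
  rw [h1]
  apply Real.sqrt_le_sqrt
  exact Finset.single_le_sum (f := fun j => dist (p j) (q j) ^ 2)
    (fun j _ => sq_nonneg _) (Finset.mem_univ i)

lemma hcoord : ∀ i, Continuous (fun p : EuclideanSpace ℝ (Fin 3) => p i) :=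
  fun i => (continuous_apply i).comp (PiLp.continuous_ofLp _ _)

/-- basic facts about the range of parameters -/
lemma aux_facts {r t : ℝ} (hr : r ∈ Set.Ioo (0 : ℝ) 1) (ht : t ∈ Set.Ioo (0 : ℝ) (r ^ 3)) :
    0 < t ∧ t ^ 2 ≤ r ^ 6 ∧ t ^ 2 ≤ r ^ 2 ∧ Real.sqrt (r ^ 6 - t ^ 2) ≤ r ^ 3 ∧
      Real.sqrt (r ^ 2 - t ^ 2) ≤ r := by
  obtain ⟨hr0, hr1⟩ := hr
  obtain ⟨ht0, htr⟩ := ht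
  have h1 : t ^ 2 ≤ r ^ 6 := by nlinarith
  have hr2 : r ^ 2 ≤ 1 := by nlinarith
  have hr4 : r ^ 4 ≤ 1 := by nlinarith
  have h2 : r ^ 6 ≤ r ^ 2 := by nlinarith
  have h3 : t ^ 2 ≤ r ^ 2 := h1.trans h2
  refine ⟨ht0, h1, h3, ?_, ?_⟩
  · have h6 : Real.sqrt (r ^ 6) = r ^ 3 := by
      rw [show (r:ℝ) ^ 6 = (r ^ 3) ^ 2 by ring]; exact Real.sqrt_sq (by positivity)
    calc Real.sqrt (r ^ 6 - t ^ 2) ≤ Real.sqrt (r ^ 6) :=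
          Real.sqrt_le_sqrt (by nlinarith [sq_nonneg t])
      _ = r ^ 3 := h6
  · calc Real.sqrt (r ^ 2 - t ^ 2) ≤ Real.sqrt (r ^ 2) :=
          Real.sqrt_le_sqrt (by nlinarith [sq_nonneg t])
      _ = r := Real.sqrt_sq hr0.le

lemma a14_mem {r t : ℝ} (hr : r ∈ Set.Ioo (0 : ℝ) 1) (ht : t ∈ Set.Ioo (0 : ℝ) (r ^ 3)) :
    a14 r t ∈ X14 := by
  obtain ⟨ht0, h1, h3, h4, h5⟩ := aux_facts hr ht
  constructor
  · show (t ^ 2 + Real.sqrt (r ^ 2 - t ^ 2) ^ 2 - r ^ 2) * _ = 0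
    rw [Real.sq_sqrt (by linarith),
      show t ^ 2 + (r ^ 2 - t ^ 2) - r ^ 2 = (0:ℝ) by ring, zero_mul]
  · exact hr.1.le

lemma b14_mem {r t : ℝ} (hr : r ∈ Set.Ioo (0 : ℝ) 1) (ht : t ∈ Set.Ioo (0 : ℝ) (r ^ 3)) :
    b14 r t ∈ X14 := by
  obtain ⟨ht0, h1, h3, h4, h5⟩ := aux_facts hr ht
  have hy : 0 ≤ r + r ^ 3 - Real.sqrt (r ^ 6 - t ^ 2) := by nlinarith [hr.1]
  constructor
  · show (_ : ℝ) * (t ^ 2 + (|r + r ^ 3 - Real.sqrt (r ^ 6 - t ^ 2)| - r - r ^ 3) ^ 2 - r ^ 6) = 0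
    rw [abs_of_nonneg hy]
    have h7 : (r + r ^ 3 - Real.sqrt (r ^ 6 - t ^ 2) - r - r ^ 3) ^ 2
        = Real.sqrt (r ^ 6 - t ^ 2) ^ 2 := by ring
    rw [h7, Real.sq_sqrt (by linarith),
      show t ^ 2 + (r ^ 6 - t ^ 2) - r ^ 6 = (0:ℝ) by ring, mul_zero]
  · exact hr.1.le

lemma norm_sub_a14_b14 {r t : ℝ} (hr : r ∈ Set.Ioo (0 : ℝ) 1) (ht : t ∈ Set.Ioo (0 : ℝ) (r ^ 3)) :
    ‖a14 r t - b14 r t‖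
      = r + r ^ 3 - Real.sqrt (r ^ 6 - t ^ 2) - Real.sqrt (r ^ 2 - t ^ 2) := by
  obtain ⟨ht0, h1, h3, h4, h5⟩ := aux_facts hr ht
  rw [a14, b14, mk3_sub]
  rw [norm_mk3]
  have hnn : 0 ≤ r + r ^ 3 - Real.sqrt (r ^ 6 - t ^ 2) - Real.sqrt (r ^ 2 - t ^ 2) := by
    nlinarith
  rw [show t - t = (0:ℝ) by ring, show r - r = (0:ℝ) by ring]
  rw [show (0:ℝ) ^ 2 + (Real.sqrt (r ^ 2 - t ^ 2) - (r + r ^ 3 - Real.sqrt (r ^ 6 - t ^ 2))) ^ 2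
      + (0:ℝ) ^ 2 = (r + r ^ 3 - Real.sqrt (r ^ 6 - t ^ 2) - Real.sqrt (r ^ 2 - t ^ 2)) ^ 2
      by ring]
  exact Real.sqrt_sq hnn

/-- Any point in both sheets has vanishing first coordinate. -/
lemma inter_coord_zero (p : EuclideanSpace ℝ (Fin 3)) (hz : 0 ≤ p 2)
    (h1 : p 0 ^ 2 + p 1 ^ 2 - p 2 ^ 2 = 0)
    (h2 : p 0 ^ 2 + (|p 1| - p 2 - p 2 ^ 3) ^ 2 - p 2 ^ 6 = 0) : p 0 = 0 := by
  set A := |p 1| with hA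
  have hA0 : 0 ≤ A := abs_nonneg _
  have hA2 : A ^ 2 = p 1 ^ 2 := sq_abs _
  -- from h2 : (A - z - z³)² ≤ (z³)², hence A ≥ z
  have key : p 2 ≤ A := by nlinarith [sq_nonneg (p 0), sq_nonneg (A - p 2), sq_nonneg (p 2 ^ 3)]
  have : p 0 ^ 2 ≤ 0 := by nlinarith
  have := le_antisymm this (sq_nonneg _)
  exact pow_eq_zero_iff (n := 2) (by norm_num) |>.mp this

/-- The key lower bound on the inner distance. -/
lemma innerDist_lower {r t : ℝ} (hr : r ∈ Set.Ioo (0 : ℝ) 1)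
    (ht : t ∈ Set.Ioo (0 : ℝ) (r ^ 3)) :
    ENNReal.ofReal t ≤ innerDist X14 (a14 r t) (b14 r t) := by
  obtain ⟨ht0, h1, h3, h4, h5⟩ := aux_facts hr ht
  rw [innerDist]
  refine le_iInf₂ fun γ hγ => ?_
  obtain ⟨hc, hm, hg0, hg1⟩ := hγ
  -- the two sheets, as functions of the parameter
  set F1 : EuclideanSpace ℝ (Fin 3) → ℝ := fun p => p 0 ^ 2 + p 1 ^ 2 - p 2 ^ 2 with hF1
  set F2 : EuclideanSpace ℝ (Fin 3) → ℝ :=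
    fun p => p 0 ^ 2 + (|p 1| - p 2 - p 2 ^ 3) ^ 2 - p 2 ^ 6 with hF2
  have hF1c : Continuous F1 := by
    exact (((hcoord 0).pow 2).add ((hcoord 1).pow 2)).sub ((hcoord 2).pow 2)
  have hF2c : Continuous F2 := by
    exact (((hcoord 0).pow 2).add ((((hcoord 1).abs.sub (hcoord 2)).sub
      ((hcoord 2).pow 3)).pow 2)).sub ((hcoord 2).pow 6)
  set u : Set ℝ := Set.Icc 0 1 ∩ (F1 ∘ γ) ⁻¹' {0} with hu
  set v : Set ℝ := Set.Icc 0 1 ∩ (F2 ∘ γ) ⁻¹' {0} with hv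
  have huc : IsClosed u :=
    (hF1c.comp_continuousOn hc).preimage_isClosed_of_isClosed isClosed_Icc isClosed_singleton
  have hvc : IsClosed v :=
    (hF2c.comp_continuousOn hc).preimage_isClosed_of_isClosed isClosed_Icc isClosed_singleton
  have hcover : Set.Icc (0:ℝ) 1 ⊆ u ∪ v := by
    intro s hs
    have hmem := hm hs
    rcases mul_eq_zero.mp hmem.1 with h | h
    · exact Or.inl ⟨hs, h⟩
    · exact Or.inr ⟨hs, h⟩
  have h0u : (0:ℝ) ∈ Set.Icc (0:ℝ) 1 ∩ u := by
    refine ⟨by norm_num, by norm_num, ?_⟩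
    show F1 (γ 0) = 0
    rw [hg0]
    show t ^ 2 + Real.sqrt (r ^ 2 - t ^ 2) ^ 2 - r ^ 2 = 0
    rw [Real.sq_sqrt (by linarith)]; ring
  have h1v : (1:ℝ) ∈ Set.Icc (0:ℝ) 1 ∩ v := by
    refine ⟨by norm_num, by norm_num, ?_⟩
    show F2 (γ 1) = 0
    rw [hg1]
    show t ^ 2 + (|r + r ^ 3 - Real.sqrt (r ^ 6 - t ^ 2)| - r - r ^ 3) ^ 2 - r ^ 6 = 0
    have hy : 0 ≤ r + r ^ 3 - Real.sqrt (r ^ 6 - t ^ 2) := by nlinarith [hr.1]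
    rw [abs_of_nonneg hy]
    have : (r + r ^ 3 - Real.sqrt (r ^ 6 - t ^ 2) - r - r ^ 3) ^ 2
        = Real.sqrt (r ^ 6 - t ^ 2) ^ 2 := by ring
    rw [this, Real.sq_sqrt (by linarith)]; ring
  obtain ⟨s, hsI, hsu, hsv⟩ := isPreconnected_closed_iff.mp isPreconnected_Icc u v huc hvc
    hcover ⟨0, h0u⟩ ⟨1, h1v⟩
  -- at `s`, the path meets both sheets, so its first coordinate is 0
  have hzs : 0 ≤ (γ s) 2 := (hm hsI).2
  have hx0 : (γ s) 0 = 0 := inter_coord_zero (γ s) hzs hsu.2 hsv.2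
  -- now compare with the variation
  have hedist : ENNReal.ofReal t ≤ edist (γ 0) (γ s) := by
    rw [edist_dist]
    apply ENNReal.ofReal_le_ofReal
    calc t = |(γ 0) 0 - (γ s) 0| := by
              rw [hg0, hx0]
              show t = |t - 0|
              rw [sub_zero, abs_of_pos ht0]
         _ ≤ dist (γ 0) (γ s) := coord_abs_le_dist _ _ _
  exact hedist.trans (eVariationOn.edist_le γ (by norm_num : (0:ℝ) ∈ Set.Icc (0:ℝ) 1) hsI)

/-- choosing `t` small makes the ratio large -/
lemma part2 {r : ℝ} (C : ℝ) (hC : 1 ≤ C) (hr : r ∈ Set.Ioo (0 : ℝ) 1) :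
    ∃ t ∈ Set.Ioo (0 : ℝ) (r ^ 3),
      ENNReal.ofReal (C * ‖a14 r t - b14 r t‖) < innerDist X14 (a14 r t) (b14 r t) := by
  obtain ⟨hr0, hr1⟩ := hr
  have hC0 : 0 < C := lt_of_lt_of_le one_pos hC
  set t : ℝ := r ^ 3 / (4 * C) with htdef
  have ht0 : 0 < t := by positivity
  have htlt : t < r ^ 3 := by
    rw [htdef, div_lt_iff₀ (by positivity)]
    nlinarith [pow_pos hr0 3]
  have htI : t ∈ Set.Ioo (0:ℝ) (r ^ 3) := ⟨ht0, htlt⟩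
  refine ⟨t, htI, ?_⟩
  obtain ⟨_, h1, h3, h4, h5⟩ := aux_facts ⟨hr0, hr1⟩ htI
  -- bound the norm
  have hb1 : r ^ 3 - Real.sqrt (r ^ 6 - t ^ 2) ≤ t ^ 2 / r ^ 3 := by
    have hlow : r ^ 3 - t ^ 2 / r ^ 3 ≤ Real.sqrt (r ^ 6 - t ^ 2) := by
      rcases le_or_gt (r ^ 3 - t ^ 2 / r ^ 3) 0 with h | h
      · exact h.trans (Real.sqrt_nonneg _)
      · rw [Real.le_sqrt h.le (by linarith)]
        have expand : (r ^ 3 - t ^ 2 / r ^ 3) ^ 2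
            = r ^ 6 - 2 * t ^ 2 + (t ^ 2 / r ^ 3) ^ 2 := by
          field_simp; ring
        have hd : (t ^ 2 / r ^ 3) ^ 2 ≤ t ^ 2 := by
          rw [div_pow, div_le_iff₀ (by positivity)]
          nlinarith [mul_nonneg (sq_nonneg t) (sub_nonneg.mpr h1)]
        linarith [expand, hd]
    linarith
  have hb2 : r - Real.sqrt (r ^ 2 - t ^ 2) ≤ t ^ 2 / r := by
    have hlow : r - t ^ 2 / r ≤ Real.sqrt (r ^ 2 - t ^ 2) := by
      rcases le_or_gt (r - t ^ 2 / r) 0 with h | h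
      · exact h.trans (Real.sqrt_nonneg _)
      · rw [Real.le_sqrt h.le (by linarith)]
        have expand : (r - t ^ 2 / r) ^ 2 = r ^ 2 - 2 * t ^ 2 + (t ^ 2 / r) ^ 2 := by
          field_simp; ring
        have hd : (t ^ 2 / r) ^ 2 ≤ t ^ 2 := by
          rw [div_pow, div_le_iff₀ (by positivity)]
          nlinarith [mul_nonneg (sq_nonneg t) (sub_nonneg.mpr h3)]
        linarith [expand, hd]
    linarith
  have hnorm := norm_sub_a14_b14 ⟨hr0, hr1⟩ htI
  have hinvr : t ^ 2 / r ≤ t ^ 2 / r ^ 3 := by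
    apply div_le_div_of_nonneg_left (sq_nonneg t) (by positivity)
    nlinarith
  have hbound : ‖a14 r t - b14 r t‖ ≤ 2 * t ^ 2 / r ^ 3 := by
    rw [hnorm]
    have : r + r ^ 3 - Real.sqrt (r ^ 6 - t ^ 2) - Real.sqrt (r ^ 2 - t ^ 2)
        = (r ^ 3 - Real.sqrt (r ^ 6 - t ^ 2)) + (r - Real.sqrt (r ^ 2 - t ^ 2)) := by ring
    rw [this]
    calc (r ^ 3 - Real.sqrt (r ^ 6 - t ^ 2)) + (r - Real.sqrt (r ^ 2 - t ^ 2))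
        ≤ t ^ 2 / r ^ 3 + t ^ 2 / r := by linarith
      _ ≤ t ^ 2 / r ^ 3 + t ^ 2 / r ^ 3 := by linarith
      _ = 2 * t ^ 2 / r ^ 3 := by ring
  have hlt : C * ‖a14 r t - b14 r t‖ < t := by
    have : C * ‖a14 r t - b14 r t‖ ≤ C * (2 * t ^ 2 / r ^ 3) :=
      mul_le_mul_of_nonneg_left hbound hC0.le
    have h2 : C * (2 * t ^ 2 / r ^ 3) = t / 2 := by
      rw [htdef]; field_simp; ring
    rw [h2] at this
    linarith
  calc ENNReal.ofReal (C * ‖a14 r t - b14 r t‖) < ENNReal.ofReal t := by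
        exact (ENNReal.ofReal_lt_ofReal_iff ht0).mpr hlt
    _ ≤ innerDist X14 (a14 r t) (b14 r t) := innerDist_lower ⟨hr0, hr1⟩ htI

/-- `X14` is not Lipschitz normally embedded at `0`: the witness curves
`α, β` lie on `X14`, satisfy the stated distance formulas and lower bound, the ratio
`d_X/‖·‖` along them is unbounded, and consequently no neighborhood of `0` in `X14` is
Lipschitz normally embedded. -/
theorem stmt14 :
    (∀ r ∈ Set.Ioo (0 : ℝ) 1, ∀ t ∈ Set.Ioo (0 : ℝ) (r ^ 3),
      a14 r t ∈ X14 ∧ b14 r t ∈ X14 ∧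
      ‖a14 r t - b14 r t‖
        = r + r ^ 3 - Real.sqrt (r ^ 6 - t ^ 2) - Real.sqrt (r ^ 2 - t ^ 2) ∧
      ENNReal.ofReal t ≤ innerDist X14 (a14 r t) (b14 r t)) ∧
    (∀ C : ℝ, 1 ≤ C → ∀ r ∈ Set.Ioo (0 : ℝ) 1, ∃ t ∈ Set.Ioo (0 : ℝ) (r ^ 3),
      ENNReal.ofReal (C * ‖a14 r t - b14 r t‖) < innerDist X14 (a14 r t) (b14 r t)) ∧
    (∀ U : Set (EuclideanSpace ℝ (Fin 3)), IsOpen U → (0 : EuclideanSpace ℝ (Fin 3)) ∈ U →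
      ¬ ∃ C : ℝ, 1 ≤ C ∧ ∀ p ∈ X14 ∩ U, ∀ q ∈ X14 ∩ U,
        innerDist (X14 ∩ U) p q ≤ ENNReal.ofReal (C * ‖p - q‖)) := by
  refine ⟨fun r hr t ht => ⟨a14_mem hr ht, b14_mem hr ht, norm_sub_a14_b14 hr ht,
      innerDist_lower hr ht⟩, fun C hC r hr => part2 C hC hr, ?_⟩
  intro U hU h0U ⟨C, hC, hLNE⟩
  obtain ⟨ε, hε, hball⟩ := Metric.isOpen_iff.mp hU 0 h0U
  set r : ℝ := min (ε / 4) (1 / 2) with hrdef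
  have hr0 : 0 < r := lt_min (by positivity) (by norm_num)
  have hr1 : r < 1 := lt_of_le_of_lt (min_le_right _ _) (by norm_num)
  have hrI : r ∈ Set.Ioo (0:ℝ) 1 := ⟨hr0, hr1⟩
  have hrε : r ≤ ε / 4 := min_le_left _ _
  obtain ⟨t, htI, hlt⟩ := part2 C hC hrI
  obtain ⟨ht0, h1, h3, h4, h5⟩ := aux_facts hrI htI
  -- a14 and b14 are in the ball
  have haU : a14 r t ∈ U := by
    apply hball
    rw [Metric.mem_ball, dist_zero_right, a14, norm_mk3]
    have hs : t ^ 2 + Real.sqrt (r ^ 2 - t ^ 2) ^ 2 + r ^ 2 ≤ (2 * r) ^ 2 := by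
      rw [Real.sq_sqrt (by linarith)]
      nlinarith
    calc Real.sqrt (t ^ 2 + Real.sqrt (r ^ 2 - t ^ 2) ^ 2 + r ^ 2)
        ≤ Real.sqrt ((2 * r) ^ 2) := Real.sqrt_le_sqrt hs
      _ = 2 * r := Real.sqrt_sq (by positivity)
      _ < ε := by linarith
  have hbU : b14 r t ∈ U := by
    apply hball
    rw [Metric.mem_ball, dist_zero_right, b14, norm_mk3]
    have hynn : 0 ≤ r + r ^ 3 - Real.sqrt (r ^ 6 - t ^ 2) := by nlinarith
    have hyle : r + r ^ 3 - Real.sqrt (r ^ 6 - t ^ 2) ≤ 2 * r := by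
      nlinarith [Real.sqrt_nonneg (r ^ 6 - t ^ 2)]
    have hs : t ^ 2 + (r + r ^ 3 - Real.sqrt (r ^ 6 - t ^ 2)) ^ 2 + r ^ 2 ≤ (3 * r) ^ 2 := by
      nlinarith
    calc Real.sqrt (t ^ 2 + (r + r ^ 3 - Real.sqrt (r ^ 6 - t ^ 2)) ^ 2 + r ^ 2)
        ≤ Real.sqrt ((3 * r) ^ 2) := Real.sqrt_le_sqrt hs
      _ = 3 * r := Real.sqrt_sq (by positivity)
      _ < ε := by linarith
  -- inner distance in `X14 ∩ U` dominates the one in `X14`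
  have hmono : innerDist X14 (a14 r t) (b14 r t)
      ≤ innerDist (X14 ∩ U) (a14 r t) (b14 r t) := by
    rw [innerDist, innerDist]
    refine le_iInf₂ fun γ hγ => ?_
    exact iInf₂_le γ ⟨hγ.1, hγ.2.1.mono_right Set.inter_subset_left, hγ.2.2⟩
  have hle := hLNE _ ⟨a14_mem hrI htI, haU⟩ _ ⟨b14_mem hrI htI, hbU⟩
  exact absurd (hlt.trans_le (hmono.trans hle)) (lt_irrefl _)
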